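/- Let V be a complex inner product space, n ≥ 1, and for i = 1,…,m and α = 1,…,n let a_{iα} ∈ End(V) be anticommuting-type Clifford elements of the form a_{iα} = γ(Å^α(e_i)·ν_α) arising from a submanifold's traceless shape operators. Then for any spinor ψ, Σ_{i,α} |γ(Å^α(e_i))ψ|² - Σ_i |Σ_α γ(Å^α(e_i)·ν_α)ψ|² = (1/1)·[ n Σ_{i,β} |γ(Å^β(e_i))ψ - (1/n) Σ_α γ(ν_β · Å^α(e_i) · ν_α)ψ|² - (n-1)|Å|² |ψ|² ]; in particular Σ_i |Σ_α γ(Å^α(e_i)·ν_α)ψ|² ≤ Σ_{i,α}|γ(Å^α(e_i))ψ|² + (n-1)|Å|²|ψ|². -/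

import Mathlib

/-- Pointwise algebraic estimate for the curvature term. In a
Euclidean space `E` with orthonormal tangent frame `{e_i}` (i = 1..m) and orthonormal
normal frame `{ν_α}` (α = 1..n, n ≥ 1), Clifford multiplication `γ` on a complex
spinor module `V` with Hermitian inner product (Clifford relations and
skew-adjointness), and traceless symmetric shape data `Å^α(e_i)` tangent-valued:
`Σ_{i,α} |γ(Å^α(e_i))ψ|² - Σ_i |Σ_α γ(Å^α(e_i)·ν_α)ψ|²
  = n Σ_{i,β} |γ(Å^β(e_i))ψ - (1/n) Σ_α γ(ν_β·Å^α(e_i)·ν_α)ψ|² - (n-1)|Å|²|ψ|²`,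
and in particular
`Σ_i |Σ_α γ(Å^α(e_i)·ν_α)ψ|² ≤ Σ_{i,α}|γ(Å^α(e_i))ψ|² + (n-1)|Å|²|ψ|²`. -/
theorem clifford_curvature_term_estimate
    {E : Type*} [NormedAddCommGroup E] [InnerProductSpace ℝ E]
    {V : Type*} [NormedAddCommGroup V] [InnerProductSpace ℂ V]
    {m n : ℕ} (hn : 1 ≤ n)
    (e : Fin m → E) (ν : Fin n → E)
    (horthe : ∀ i j, (inner ℝ (e i) (e j) : ℝ) = if i = j then 1 else 0)
    (horthν : ∀ α β, (inner ℝ (ν α) (ν β) : ℝ) = if α = β then 1 else 0)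
    (horth : ∀ i α, (inner ℝ (e i) (ν α) : ℝ) = 0)
    (γ : E →ₗ[ℝ] Module.End ℂ V)
    (hcl : ∀ v w : E, γ v * γ w + γ w * γ v
      = (((-(2 * (inner ℝ v w : ℝ))) : ℝ) : ℂ) • (1 : Module.End ℂ V))
    (hskew : ∀ (v : E) (x y : V), (inner ℂ (γ v x) y : ℂ) = -(inner ℂ x (γ v y) : ℂ))
    (Ao : Fin n → Fin m → E)
    (htangent : ∀ α i β, (inner ℝ (Ao α i) (ν β) : ℝ) = 0)
    (hsymm : ∀ α i j, (inner ℝ (Ao α i) (e j) : ℝ) = (inner ℝ (Ao α j) (e i) : ℝ))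
    (htraceless : ∀ α, ∑ i, (inner ℝ (Ao α i) (e i) : ℝ) = 0)
    (ψ : V) :
    ((∑ i, ∑ α, ‖γ (Ao α i) ψ‖ ^ 2) - ∑ i, ‖∑ α, γ (Ao α i) (γ (ν α) ψ)‖ ^ 2
      = (n : ℝ) * (∑ i, ∑ β, ‖γ (Ao β i) ψ
          - ((n : ℂ))⁻¹ • ∑ α, γ (ν β) (γ (Ao α i) (γ (ν α) ψ))‖ ^ 2)
        - ((n : ℝ) - 1) * (∑ α, ∑ i, ‖Ao α i‖ ^ 2) * ‖ψ‖ ^ 2) ∧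
    (∑ i, ‖∑ α, γ (Ao α i) (γ (ν α) ψ)‖ ^ 2
      ≤ (∑ i, ∑ α, ‖γ (Ao α i) ψ‖ ^ 2)
        + ((n : ℝ) - 1) * (∑ α, ∑ i, ‖Ao α i‖ ^ 2) * ‖ψ‖ ^ 2) := by
  classical
  have hn0 : (n : ℝ) ≠ 0 := Nat.cast_ne_zero.mpr (by omega)
  have hre : ∀ y : V, (inner ℂ y y : ℂ).re = ‖y‖ ^ 2 := fun y => by
    rw [← RCLike.re_to_complex]
    exact inner_self_eq_norm_sq y
  -- square of Clifford multiplication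
  have hsq : ∀ (v : E) (x : V), γ v (γ v x) = ((-(‖v‖ ^ 2) : ℝ) : ℂ) • x := by
    intro v x
    have h := DFunLike.congr_fun (hcl v v) x
    simp only [LinearMap.add_apply, Module.End.mul_apply, LinearMap.smul_apply,
      Module.End.one_apply] at h
    have h2 : (2 : ℂ) • γ v (γ v x) = ((-(2 * (inner ℝ v v : ℝ)) : ℝ) : ℂ) • x := by
      rw [two_smul]; exact h
    have h3 : γ v (γ v x) = ((2 : ℂ)⁻¹ * ((-(2 * (inner ℝ v v : ℝ)) : ℝ) : ℂ)) • x := by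
      rw [mul_smul, ← h2, inv_smul_smul₀ (two_ne_zero)]
    rw [h3, real_inner_self_eq_norm_sq]
    congr 1
    push_cast
    ring
  -- norm of Clifford multiplication
  have hnorm : ∀ (v : E) (x : V), ‖γ v x‖ ^ 2 = ‖v‖ ^ 2 * ‖x‖ ^ 2 := by
    intro v x
    have h1 : (inner ℂ (γ v x) (γ v x) : ℂ) = ((‖v‖ ^ 2 : ℝ) : ℂ) * inner ℂ x x := by
      rw [hskew, hsq, inner_smul_right]
      push_cast
      ring
    have h2 := congrArg Complex.re h1
    rw [hre, Complex.re_ofReal_mul, hre] at h2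
    exact h2
  have hν1 : ∀ β, ‖ν β‖ ^ 2 = 1 := by
    intro β
    have h := horthν β β
    simp only [if_true, eq_self_iff_true] at h
    rw [← real_inner_self_eq_norm_sq, h]
  -- anticommutation for orthogonal vectors
  have hanti : ∀ (v w : E), (inner ℝ v w : ℝ) = 0 → ∀ x : V,
      γ v (γ w x) = - γ w (γ v x) := by
    intro v w hvw x
    have h := DFunLike.congr_fun (hcl v w) x
    simp only [LinearMap.add_apply, Module.End.mul_apply, LinearMap.smul_apply,
      Module.End.one_apply, hvw] at h
    simp only [mul_zero, neg_zero, Complex.ofReal_zero, zero_smul] at h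
    exact eq_neg_of_add_eq_zero_left h
  set Sv : Fin m → V := fun i => ∑ α, γ (Ao α i) (γ (ν α) ψ) with hSvdef
  have hSv : ∀ i, (∑ α, γ (Ao α i) (γ (ν α) ψ)) = Sv i := fun i => rfl
  -- skew-symmetry of x ↦ ∑ α γ(Ao α i)(γ(ν α) x)
  have hskewS : ∀ (i : Fin m) (x y : V),
      (inner ℂ (∑ α, γ (Ao α i) (γ (ν α) x)) y : ℂ)
        = -(inner ℂ x (∑ α, γ (Ao α i) (γ (ν α) y)) : ℂ) := by
    intro i x y
    rw [sum_inner, inner_sum, ← Finset.sum_neg_distrib]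
    refine Finset.sum_congr rfl fun α _ => ?_
    calc (inner ℂ (γ (Ao α i) (γ (ν α) x)) y : ℂ)
        = -(inner ℂ (γ (ν α) x) (γ (Ao α i) y) : ℂ) := hskew _ _ _
      _ = (inner ℂ x (γ (ν α) (γ (Ao α i) y)) : ℂ) := by rw [hskew]; ring
      _ = -(inner ℂ x (γ (Ao α i) (γ (ν α) y)) : ℂ) := by
          rw [hanti (ν α) (Ao α i) (by rw [real_inner_comm]; exact htangent α i α),
            inner_neg_right]
  -- key identity: Σ_β ⟨γ(Ao β i)ψ, γ(ν β)(Sv i)⟩ = ⟨Sv i, Sv i⟩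
  have hkey : ∀ i, ∑ β, (inner ℂ (γ (Ao β i) ψ) (γ (ν β) (Sv i)) : ℂ)
      = (inner ℂ (Sv i) (Sv i) : ℂ) := by
    intro i
    calc ∑ β, (inner ℂ (γ (Ao β i) ψ) (γ (ν β) (Sv i)) : ℂ)
        = ∑ β, -(inner ℂ ψ (γ (Ao β i) (γ (ν β) (Sv i))) : ℂ) :=
          Finset.sum_congr rfl fun β _ => hskew _ _ _
      _ = -(inner ℂ ψ (∑ β, γ (Ao β i) (γ (ν β) (Sv i))) : ℂ) := by
          rw [inner_sum, Finset.sum_neg_distrib]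
      _ = (inner ℂ (Sv i) (Sv i) : ℂ) := by
          rw [← hskewS i ψ (Sv i), hSv]
  have hcast : ((n : ℂ))⁻¹ = (((n : ℝ)⁻¹ : ℝ) : ℂ) := by push_cast; ring
  -- per-i expansion of the RHS quadratic
  have hper : ∀ i, ∑ β, ‖γ (Ao β i) ψ
        - ((n : ℂ))⁻¹ • ∑ α, γ (ν β) (γ (Ao α i) (γ (ν α) ψ))‖ ^ 2
      = (∑ β, ‖Ao β i‖ ^ 2) * ‖ψ‖ ^ 2 - (n : ℝ)⁻¹ * ‖Sv i‖ ^ 2 := by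
    intro i
    have hmap : ∀ β, (∑ α, γ (ν β) (γ (Ao α i) (γ (ν α) ψ))) = γ (ν β) (Sv i) := by
      intro β
      rw [← hSv i]
      exact (map_sum (γ (ν β)) _ _).symm
    have hterm : ∀ β, ‖γ (Ao β i) ψ
          - ((n : ℂ))⁻¹ • ∑ α, γ (ν β) (γ (Ao α i) (γ (ν α) ψ))‖ ^ 2
        = ‖Ao β i‖ ^ 2 * ‖ψ‖ ^ 2
          - 2 * ((n : ℝ)⁻¹ * (inner ℂ (γ (Ao β i) ψ) (γ (ν β) (Sv i)) : ℂ).re)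
          + (n : ℝ)⁻¹ ^ 2 * ‖Sv i‖ ^ 2 := by
      intro β
      rw [hmap β, norm_sub_sq (𝕜 := ℂ), hnorm, hcast, inner_smul_right,
        norm_smul, mul_pow]
      simp only [RCLike.re_to_complex, Complex.re_ofReal_mul, Complex.norm_real,
        Real.norm_eq_abs, sq_abs]
      rw [hnorm, hν1, one_mul]
    calc ∑ β, ‖γ (Ao β i) ψ
          - ((n : ℂ))⁻¹ • ∑ α, γ (ν β) (γ (Ao α i) (γ (ν α) ψ))‖ ^ 2
        = ∑ β, (‖Ao β i‖ ^ 2 * ‖ψ‖ ^ 2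
            - 2 * ((n : ℝ)⁻¹ * (inner ℂ (γ (Ao β i) ψ) (γ (ν β) (Sv i)) : ℂ).re)
            + (n : ℝ)⁻¹ ^ 2 * ‖Sv i‖ ^ 2) :=
          Finset.sum_congr rfl fun β _ => hterm β
      _ = (∑ β, ‖Ao β i‖ ^ 2) * ‖ψ‖ ^ 2
            - 2 * ((n : ℝ)⁻¹ * (∑ β, (inner ℂ (γ (Ao β i) ψ) (γ (ν β) (Sv i)) : ℂ)).re)
            + (n : ℝ) * ((n : ℝ)⁻¹ ^ 2 * ‖Sv i‖ ^ 2) := by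
          simp [Finset.sum_add_distrib, Finset.sum_sub_distrib, ← Finset.sum_mul,
            Finset.sum_const, Finset.card_fin, Complex.re_sum, Finset.mul_sum]
      _ = (∑ β, ‖Ao β i‖ ^ 2) * ‖ψ‖ ^ 2 - (n : ℝ)⁻¹ * ‖Sv i‖ ^ 2 := by
          rw [hkey i, hre]
          field_simp
          ring
  -- abbreviations for the final computation
  have hAsum : (∑ i, ∑ α, ‖γ (Ao α i) ψ‖ ^ 2)
      = (∑ i, ∑ α, ‖Ao α i‖ ^ 2) * ‖ψ‖ ^ 2 := by
    rw [Finset.sum_mul]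
    refine Finset.sum_congr rfl fun i _ => ?_
    rw [Finset.sum_mul]
    exact Finset.sum_congr rfl fun α _ => hnorm _ _
  have hBswap : (∑ α, ∑ i, ‖Ao α i‖ ^ 2) = ∑ i, ∑ α, ‖Ao α i‖ ^ 2 :=
    Finset.sum_comm
  have hbig : (∑ i, ∑ β, ‖γ (Ao β i) ψ
        - ((n : ℂ))⁻¹ • ∑ α, γ (ν β) (γ (Ao α i) (γ (ν α) ψ))‖ ^ 2)
      = (∑ i, ∑ α, ‖Ao α i‖ ^ 2) * ‖ψ‖ ^ 2 - (n : ℝ)⁻¹ * ∑ i, ‖Sv i‖ ^ 2 := by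
    rw [Finset.sum_congr rfl fun i _ => hper i, Finset.sum_sub_distrib,
      ← Finset.sum_mul, ← Finset.mul_sum]
  have goal1 : (∑ i, ∑ α, ‖γ (Ao α i) ψ‖ ^ 2)
      - ∑ i, ‖∑ α, γ (Ao α i) (γ (ν α) ψ)‖ ^ 2
      = (n : ℝ) * (∑ i, ∑ β, ‖γ (Ao β i) ψ
          - ((n : ℂ))⁻¹ • ∑ α, γ (ν β) (γ (Ao α i) (γ (ν α) ψ))‖ ^ 2)
        - ((n : ℝ) - 1) * (∑ α, ∑ i, ‖Ao α i‖ ^ 2) * ‖ψ‖ ^ 2 := by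
    simp only [hSv]
    rw [hbig, hAsum, hBswap]
    field_simp
    ring
  refine ⟨goal1, ?_⟩
  have hP : 0 ≤ ∑ i, ∑ β, ‖γ (Ao β i) ψ
      - ((n : ℂ))⁻¹ • ∑ α, γ (ν β) (γ (Ao α i) (γ (ν α) ψ))‖ ^ 2 := by
    positivity
  have hn1 : (1 : ℝ) ≤ (n : ℝ) := by exact_mod_cast hn
  nlinarith [goal1, hP]
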